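/- For every abelian group H, the module of Kähler differentials Ω_{ℤ[H]/ℤ} of the group algebra ℤ[H] over ℤ is isomorphic as a ℤ[H]-module to H ⊗_ℤ ℤ[H], via the map sending d[h] to h ⊗ [h]. -/

import Mathlib

open scoped TensorProduct

namespace Stmt5Aux

variable (H : Type*) [AddCommGroup H]

/-- The underlying linear map of the derivation `[h] ↦ [h] ⊗ h`. -/
noncomputable def L : AddMonoidAlgebra ℤ H →ₗ[ℤ] (AddMonoidAlgebra ℤ H ⊗[ℤ] H) :=
  (Finsupp.lsum ℤ fun h =>
    LinearMap.toSpanSingleton ℤ _ (AddMonoidAlgebra.single h (1 : ℤ) ⊗ₜ[ℤ] h))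
    ∘ₗ (AddMonoidAlgebra.coeffLinearEquiv ℤ).toLinearMap

@[simp] theorem L_single (h : H) (n : ℤ) :
    L H (AddMonoidAlgebra.single h n) = n • (AddMonoidAlgebra.single h (1 : ℤ) ⊗ₜ[ℤ] h) := by
  unfold L
  erw [Finsupp.lsum_single (S := ℤ)]
  rfl

theorem L_leibniz (a b : AddMonoidAlgebra ℤ H) :
    L H (a * b) = a • L H b + b • L H a := by
  induction a using AddMonoidAlgebra.induction_on with
  | of g =>
    induction b using AddMonoidAlgebra.induction_on with
    | of h =>
      simp only [AddMonoidAlgebra.of_apply, toAdd_ofAdd]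
      simp only [AddMonoidAlgebra.single_mul_single, one_mul, mul_one, L_single, one_smul,
        TensorProduct.smul_tmul', smul_eq_mul, TensorProduct.tmul_add]
      rw [add_comm h g]
      abel
    | add f g' hf hg =>
      rw [mul_add, map_add, hf, hg, map_add, smul_add, add_smul]
      abel
    | smul r f hf =>
      rw [mul_smul_comm, map_smul, hf, smul_add, map_smul, smul_comm r, smul_assoc]
  | add f g' hf hg =>
    rw [add_mul, map_add, hf, hg, map_add, add_smul, smul_add]
    abel
  | smul r f hf =>
    rw [smul_mul_assoc, map_smul, hf, smul_add, map_smul, smul_assoc, smul_comm r b]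

/-- The derivation `ℤ[H] → ℤ[H] ⊗ H`, `[h] ↦ [h] ⊗ h`. -/
noncomputable def der : Derivation ℤ (AddMonoidAlgebra ℤ H) (AddMonoidAlgebra ℤ H ⊗[ℤ] H) where
  toLinearMap := L H
  map_one_eq_zero' := by
    show L H 1 = 0
    rw [AddMonoidAlgebra.one_def, L_single, one_smul, TensorProduct.tmul_zero]
  leibniz' := L_leibniz H

theorem d_add (g h : H) :
    KaehlerDifferential.D ℤ (AddMonoidAlgebra ℤ H) (AddMonoidAlgebra.single (g + h) 1) =
      AddMonoidAlgebra.single g (1 : ℤ) •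
        KaehlerDifferential.D ℤ (AddMonoidAlgebra ℤ H) (AddMonoidAlgebra.single h 1) +
      AddMonoidAlgebra.single h (1 : ℤ) •
        KaehlerDifferential.D ℤ (AddMonoidAlgebra ℤ H) (AddMonoidAlgebra.single g 1) := by
  rw [show (AddMonoidAlgebra.single (g + h) (1 : ℤ)) =
      AddMonoidAlgebra.single g 1 * AddMonoidAlgebra.single h 1 by
    rw [AddMonoidAlgebra.single_mul_single, one_mul]]
  exact Derivation.leibniz _ _ _

/-- The additive map `h ↦ [-h] • d[h]`. -/
noncomputable def δ : H →+ Ω[AddMonoidAlgebra ℤ H⁄ℤ] :=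
  AddMonoidHom.mk'
    (fun h => AddMonoidAlgebra.single (-h) (1 : ℤ) •
      KaehlerDifferential.D ℤ (AddMonoidAlgebra ℤ H) (AddMonoidAlgebra.single h 1))
    (by
      intro g h
      rw [d_add, smul_add, smul_smul, smul_smul, AddMonoidAlgebra.single_mul_single,
        AddMonoidAlgebra.single_mul_single, one_mul,
        show -(g + h) + g = -h by abel, show -(g + h) + h = -g by abel, add_comm])

@[simp] theorem δ_apply (h : H) :
    δ H h = AddMonoidAlgebra.single (-h) (1 : ℤ) •
      KaehlerDifferential.D ℤ (AddMonoidAlgebra ℤ H) (AddMonoidAlgebra.single h 1) := rfl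

noncomputable def ψ : (AddMonoidAlgebra ℤ H ⊗[ℤ] H) →ₗ[AddMonoidAlgebra ℤ H]
    Ω[AddMonoidAlgebra ℤ H⁄ℤ] :=
  TensorProduct.AlgebraTensorModule.lift
    (LinearMap.toSpanSingleton (AddMonoidAlgebra ℤ H) _ (δ H).toIntLinearMap)

@[simp] theorem ψ_tmul (x : AddMonoidAlgebra ℤ H) (h : H) :
    ψ H (x ⊗ₜ[ℤ] h) = x • δ H h := rfl

noncomputable def φ : Ω[AddMonoidAlgebra ℤ H⁄ℤ] →ₗ[AddMonoidAlgebra ℤ H]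
    (AddMonoidAlgebra ℤ H ⊗[ℤ] H) :=
  (der H).liftKaehlerDifferential

@[simp] theorem φ_D (s : AddMonoidAlgebra ℤ H) :
    φ H (KaehlerDifferential.D ℤ (AddMonoidAlgebra ℤ H) s) = L H s :=
  Derivation.liftKaehlerDifferential_comp_D _ _

theorem comp1 : (φ H).comp (ψ H) = LinearMap.id := by
  apply TensorProduct.AlgebraTensorModule.ext
  intro x h
  simp only [LinearMap.comp_apply, ψ_tmul, δ_apply, LinearMap.id_apply,
    TensorProduct.AlgebraTensorModule.curry_apply, LinearMap.restrictScalars_apply]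
  rw [map_smul, map_smul, φ_D, L_single, one_smul, smul_smul, TensorProduct.smul_tmul',
    smul_eq_mul, mul_assoc, AddMonoidAlgebra.single_mul_single, one_mul, neg_add_cancel,
    ← AddMonoidAlgebra.one_def, mul_one]

theorem ψ_L (s : AddMonoidAlgebra ℤ H) :
    ψ H (L H s) = KaehlerDifferential.D ℤ (AddMonoidAlgebra ℤ H) s := by
  induction s using AddMonoidAlgebra.induction_on with
  | of g =>
    simp only [AddMonoidAlgebra.of_apply, toAdd_ofAdd]
    rw [L_single, one_smul, ψ_tmul, δ_apply, smul_smul, AddMonoidAlgebra.single_mul_single,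
      add_neg_cancel, one_mul, ← AddMonoidAlgebra.one_def, one_smul]
  | add f g' hf hg => rw [map_add, map_add, hf, hg, map_add]
  | smul r f hf =>
    rw [map_smul, (ψ H).map_smul_of_tower, hf, Derivation.map_smul]
    rfl

theorem comp2 : (ψ H).comp (φ H) = LinearMap.id := by
  apply Derivation.liftKaehlerDifferential_unique
  ext s
  simp only [Derivation.coe_comp, LinearMap.coe_comp, Function.comp_apply,
    LinearMap.coe_restrictScalars, Derivation.coeFn_coe, LinearMap.id_coe, id_eq]
  rw [φ_D, ψ_L]

end Stmt5Aux

/-- For every abelian group `H`, the module of Kähler differentials of the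
group algebra `ℤ[H]` over `ℤ` is isomorphic as a `ℤ[H]`-module to `ℤ[H] ⊗_ℤ H`, via
the map sending `d[h]` to `[h] ⊗ h`. -/
theorem stmt_5 (H : Type*) [AddCommGroup H] :
    ∃ e : Ω[AddMonoidAlgebra ℤ H⁄ℤ] ≃ₗ[AddMonoidAlgebra ℤ H]
        (AddMonoidAlgebra ℤ H ⊗[ℤ] H),
      ∀ h : H,
        e ((KaehlerDifferential.D ℤ (AddMonoidAlgebra ℤ H))
            (AddMonoidAlgebra.single h 1)) =
          AddMonoidAlgebra.single h (1 : ℤ) ⊗ₜ[ℤ] h := by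
  refine ⟨LinearEquiv.ofLinear (Stmt5Aux.φ H) (Stmt5Aux.ψ H) (Stmt5Aux.comp1 H)
    (Stmt5Aux.comp2 H), fun h => ?_⟩
  show Stmt5Aux.φ H _ = _
  rw [Stmt5Aux.φ_D, Stmt5Aux.L_single, one_smul]
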